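/- arXiv:1403.6730 — 5 statements merged into one kernel-verified Lean document; each statement's English description precedes it below -/
import Mathlib

section
/- Any tiling of a 3×n rectangle by T-tetrominoes and monominoes uses at least ⌊n/3⌋ monominoes. -/
/-- The four rotations of the T-tetromino, as sets of cells (row, col). -/
def tShapes : Finset (Finset (ℤ × ℤ)) :=
  { {(0,0),(0,1),(0,2),(1,1)},
    {(0,0),(0,1),(0,2),(-1,1)},
    {(0,0),(1,0),(2,0),(1,1)},
    {(0,0),(1,0),(2,0),(1,-1)} }

/-- A placed T-tetromino: a translate of one of the four rotations. -/
def IsTPlacement (p : Finset (ℤ × ℤ)) : Prop :=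
  ∃ s ∈ tShapes, ∃ t : ℤ × ℤ, p = s.image (· + t)

/-- The m×n rectangle of cells. -/
noncomputable def rectCells (m n : ℕ) : Finset (ℤ × ℤ) :=
  (Finset.Ico 0 (m:ℤ)) ×ˢ (Finset.Ico 0 (n:ℤ))

/-- A tiling of a region `R` by T-tetrominoes and single-cell monominoes. -/
def IsTiling (P : Finset (Finset (ℤ × ℤ))) (R : Finset (ℤ × ℤ)) : Prop :=
  (∀ p ∈ P, IsTPlacement p ∨ ∃ c, p = {c}) ∧
  (∀ p ∈ P, ∀ q ∈ P, p ≠ q → Disjoint p q) ∧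
  P.biUnion id = R

/-- A tiling of a region `R` by T-tetrominoes alone. -/
def IsTTiling (P : Finset (Finset (ℤ × ℤ))) (R : Finset (ℤ × ℤ)) : Prop :=
  (∀ p ∈ P, IsTPlacement p) ∧
  (∀ p ∈ P, ∀ q ∈ P, p ≠ q → Disjoint p q) ∧
  P.biUnion id = R

/-- The number of monominoes (single-cell pieces) used in a tiling. -/
def monoCount (P : Finset (Finset (ℤ × ℤ))) : ℕ :=
  (P.filter (fun p => p.card = 1)).card

/-- The gap number `M(m,n)`: the least number of monominoes in a tiling of the
m×n rectangle by T-tetrominoes and monominoes. -/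
noncomputable def gapNumber (m n : ℕ) : ℕ :=
  sInf {g | ∃ P, IsTiling P (rectCells m n) ∧ monoCount P = g}

def tCands : List (Finset (ℤ × ℤ)) := [
  {((0:ℤ),(-2:ℤ)), ((0:ℤ),(-1:ℤ)), ((0:ℤ),(0:ℤ)), ((1:ℤ),(-1:ℤ))},
  {((0:ℤ),(-1:ℤ)), ((0:ℤ),(0:ℤ)), ((0:ℤ),(1:ℤ)), ((1:ℤ),(0:ℤ))},
  {((0:ℤ),(-1:ℤ)), ((1:ℤ),(-2:ℤ)), ((1:ℤ),(-1:ℤ)), ((1:ℤ),(0:ℤ))},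
  {((0:ℤ),(-1:ℤ)), ((1:ℤ),(-1:ℤ)), ((1:ℤ),(0:ℤ)), ((2:ℤ),(-1:ℤ))},
  {((0:ℤ),(0:ℤ)), ((0:ℤ),(1:ℤ)), ((0:ℤ),(2:ℤ)), ((1:ℤ),(1:ℤ))},
  {((0:ℤ),(0:ℤ)), ((1:ℤ),(-1:ℤ)), ((1:ℤ),(0:ℤ)), ((1:ℤ),(1:ℤ))},
  {((0:ℤ),(0:ℤ)), ((1:ℤ),(-1:ℤ)), ((1:ℤ),(0:ℤ)), ((2:ℤ),(0:ℤ))},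
  {((0:ℤ),(0:ℤ)), ((1:ℤ),(0:ℤ)), ((1:ℤ),(1:ℤ)), ((2:ℤ),(0:ℤ))},
  {((0:ℤ),(1:ℤ)), ((0:ℤ),(2:ℤ)), ((0:ℤ),(3:ℤ)), ((1:ℤ),(2:ℤ))},
  {((0:ℤ),(1:ℤ)), ((1:ℤ),(0:ℤ)), ((1:ℤ),(1:ℤ)), ((1:ℤ),(2:ℤ))},
  {((0:ℤ),(1:ℤ)), ((1:ℤ),(0:ℤ)), ((1:ℤ),(1:ℤ)), ((2:ℤ),(1:ℤ))},
  {((0:ℤ),(1:ℤ)), ((1:ℤ),(1:ℤ)), ((1:ℤ),(2:ℤ)), ((2:ℤ),(1:ℤ))},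
  {((0:ℤ),(2:ℤ)), ((0:ℤ),(3:ℤ)), ((0:ℤ),(4:ℤ)), ((1:ℤ),(3:ℤ))},
  {((0:ℤ),(2:ℤ)), ((1:ℤ),(1:ℤ)), ((1:ℤ),(2:ℤ)), ((1:ℤ),(3:ℤ))},
  {((0:ℤ),(2:ℤ)), ((1:ℤ),(1:ℤ)), ((1:ℤ),(2:ℤ)), ((2:ℤ),(2:ℤ))},
  {((0:ℤ),(2:ℤ)), ((1:ℤ),(2:ℤ)), ((1:ℤ),(3:ℤ)), ((2:ℤ),(2:ℤ))},
  {((0:ℤ),(3:ℤ)), ((1:ℤ),(2:ℤ)), ((1:ℤ),(3:ℤ)), ((1:ℤ),(4:ℤ))},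
  {((0:ℤ),(3:ℤ)), ((1:ℤ),(2:ℤ)), ((1:ℤ),(3:ℤ)), ((2:ℤ),(3:ℤ))},
  {((1:ℤ),(-2:ℤ)), ((1:ℤ),(-1:ℤ)), ((1:ℤ),(0:ℤ)), ((2:ℤ),(-1:ℤ))},
  {((1:ℤ),(-1:ℤ)), ((1:ℤ),(0:ℤ)), ((1:ℤ),(1:ℤ)), ((2:ℤ),(0:ℤ))},
  {((1:ℤ),(-1:ℤ)), ((2:ℤ),(-2:ℤ)), ((2:ℤ),(-1:ℤ)), ((2:ℤ),(0:ℤ))},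
  {((1:ℤ),(0:ℤ)), ((1:ℤ),(1:ℤ)), ((1:ℤ),(2:ℤ)), ((2:ℤ),(1:ℤ))},
  {((1:ℤ),(0:ℤ)), ((2:ℤ),(-1:ℤ)), ((2:ℤ),(0:ℤ)), ((2:ℤ),(1:ℤ))},
  {((1:ℤ),(1:ℤ)), ((1:ℤ),(2:ℤ)), ((1:ℤ),(3:ℤ)), ((2:ℤ),(2:ℤ))},
  {((1:ℤ),(1:ℤ)), ((2:ℤ),(0:ℤ)), ((2:ℤ),(1:ℤ)), ((2:ℤ),(2:ℤ))},
  {((1:ℤ),(2:ℤ)), ((1:ℤ),(3:ℤ)), ((1:ℤ),(4:ℤ)), ((2:ℤ),(3:ℤ))},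
  {((1:ℤ),(2:ℤ)), ((2:ℤ),(1:ℤ)), ((2:ℤ),(2:ℤ)), ((2:ℤ),(3:ℤ))},
  {((1:ℤ),(3:ℤ)), ((2:ℤ),(2:ℤ)), ((2:ℤ),(3:ℤ)), ((2:ℤ),(4:ℤ))}]

def windowCells : List (ℤ × ℤ) :=
  [(0,0),(0,1),(0,2),(1,0),(1,1),(1,2),(2,0),(2,1),(2,2)]

def searchT : List (ℤ × ℤ) → List (Finset (ℤ × ℤ)) → Bool
  | [], _ => true
  | x :: xs, placed =>
    if placed.any (fun p => decide (x ∈ p)) then searchT xs placed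
    else tCands.any (fun q =>
      decide (x ∈ q) && placed.all (fun p => decide (Disjoint p q)) && searchT xs (q :: placed))

theorem searchT_false : searchT windowCells [] = false := by decide

theorem searchT_sound (f : ℤ × ℤ → Finset (ℤ × ℤ))
    (hdisj : ∀ x y, f x = f y ∨ Disjoint (f x) (f y)) :
    ∀ (todo : List (ℤ × ℤ)) (placed : List (Finset (ℤ × ℤ))),
    (∀ x ∈ todo, f x ∈ tCands ∧ x ∈ f x) →
    (∀ p ∈ placed, ∃ y, f y = p) →
    searchT todo placed = true := by
  intro todo
  induction todo with
  | nil => intro placed _ _; rfl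
  | cons x xs ih =>
    intro placed htodo hplaced
    simp only [searchT]
    by_cases hcond : placed.any (fun p => decide (x ∈ p)) = true
    · rw [if_pos hcond]
      exact ih placed (fun y hy => htodo y (List.mem_cons_of_mem _ hy)) hplaced
    · rw [if_neg hcond]
      have hxnot : ∀ p ∈ placed, x ∉ p := by
        intro p hp hxp
        exact hcond (List.any_eq_true.2 ⟨p, hp, decide_eq_true hxp⟩)
      obtain ⟨hfc, hfx⟩ := htodo x List.mem_cons_self
      rw [List.any_eq_true]
      refine ⟨f x, hfc, ?_⟩
      rw [Bool.and_eq_true, Bool.and_eq_true]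
      refine ⟨⟨decide_eq_true hfx, ?_⟩, ?_⟩
      · rw [List.all_eq_true]
        intro p hp
        apply decide_eq_true
        obtain ⟨y, hy⟩ := hplaced p hp
        rcases hdisj x y with h | h
        · exact absurd (by rw [hy] at h; rw [h] at hfx; exact hfx) (hxnot p hp)
        · rw [← hy]; exact h.symm
      · refine ih (f x :: placed) (fun y hy => htodo y (List.mem_cons_of_mem _ hy)) ?_
        intro p hp
        rcases List.mem_cons.1 hp with h | h
        · exact ⟨x, h.symm⟩
        · exact hplaced p h

lemma placement_mem_tCands (s : Finset (ℤ × ℤ)) (hs : s ∈ tShapes) (t : ℤ × ℤ)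
    (x : ℤ × ℤ) (hx : x ∈ s.image (· + t))
    (hrow : ∀ c ∈ s.image (· + t), 0 ≤ c.1 ∧ c.1 < 3)
    (hx2 : 0 ≤ x.2) (hx3 : x.2 < 3) :
    s.image (· + t) ∈ tCands := by
  obtain ⟨t1, t2⟩ := t
  have hb : ∀ c ∈ s, 0 ≤ c.1 + t1 ∧ c.1 + t1 < 3 := by
    intro c hc
    have h := hrow (c + (t1, t2)) (Finset.mem_image_of_mem _ hc)
    simpa [Prod.fst_add] using h
  obtain ⟨c, hc, hxeq⟩ := Finset.mem_image.1 hx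
  obtain ⟨c1, c2⟩ := c
  subst hxeq
  simp only [Prod.snd_add] at hx2 hx3
  simp only [tShapes, Finset.mem_insert, Finset.mem_singleton] at hs
  rcases hs with rfl | rfl | rfl | rfl
  · have hb1 := hb (0, 0) (by decide)
    have hb2 := hb (1, 1) (by decide)
    norm_num at hb1 hb2 hx2 hx3
    have hcb : 0 ≤ c2 ∧ c2 ≤ 2 := by
      simp only [Finset.mem_insert, Finset.mem_singleton, Prod.mk.injEq] at hc
      omega
    obtain ⟨hu1, hu2⟩ : 0 ≤ t1 ∧ t1 ≤ 1 := by omega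
    obtain ⟨hv1, hv2⟩ : -2 ≤ t2 ∧ t2 ≤ 2 := by omega
    interval_cases t1 <;> interval_cases t2 <;> decide
  · have hb1 := hb (0, 0) (by decide)
    have hb2 := hb (-1, 1) (by decide)
    norm_num at hb1 hb2 hx2 hx3
    have hcb : 0 ≤ c2 ∧ c2 ≤ 2 := by
      simp only [Finset.mem_insert, Finset.mem_singleton, Prod.mk.injEq] at hc
      omega
    obtain ⟨hu1, hu2⟩ : 1 ≤ t1 ∧ t1 ≤ 2 := by omega
    obtain ⟨hv1, hv2⟩ : -2 ≤ t2 ∧ t2 ≤ 2 := by omega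
    interval_cases t1 <;> interval_cases t2 <;> decide
  · have hb1 := hb (0, 0) (by decide)
    have hb2 := hb (2, 0) (by decide)
    norm_num at hb1 hb2 hx2 hx3
    have hcb : 0 ≤ c2 ∧ c2 ≤ 1 := by
      simp only [Finset.mem_insert, Finset.mem_singleton, Prod.mk.injEq] at hc
      omega
    obtain ⟨hu1, hu2⟩ : 0 ≤ t1 ∧ t1 ≤ 0 := by omega
    obtain ⟨hv1, hv2⟩ : -1 ≤ t2 ∧ t2 ≤ 2 := by omega
    interval_cases t1 <;> interval_cases t2 <;> decide
  · have hb1 := hb (0, 0) (by decide)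
    have hb2 := hb (2, 0) (by decide)
    norm_num at hb1 hb2 hx2 hx3
    have hcb : -1 ≤ c2 ∧ c2 ≤ 0 := by
      simp only [Finset.mem_insert, Finset.mem_singleton, Prod.mk.injEq] at hc
      omega
    obtain ⟨hu1, hu2⟩ : 0 ≤ t1 ∧ t1 ≤ 0 := by omega
    obtain ⟨hv1, hv2⟩ : 0 ≤ t2 ∧ t2 ≤ 3 := by omega
    interval_cases t1 <;> interval_cases t2 <;> decide

lemma exists_mono_in_window (n : ℕ) (P : Finset (Finset (ℤ × ℤ)))
    (hP : IsTiling P (rectCells 3 n)) (a : ℤ) (ha : 0 ≤ a) (han : a + 3 ≤ (n : ℤ)) :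
    ∃ p ∈ P, ∃ c : ℤ × ℤ, p = {c} ∧ a ≤ c.2 ∧ c.2 < a + 3 := by
  classical
  obtain ⟨htype, hdisj, hcover⟩ := hP
  by_contra hcon
  have hinj : Function.Injective (fun c : ℤ × ℤ => (c.1, c.2 - a)) := by
    intro u v h
    simp only [Prod.mk.injEq] at h
    exact Prod.ext_iff.2 ⟨h.1, by omega⟩
  have hex : ∀ x : ℤ × ℤ, 0 ≤ x.1 → x.1 < 3 → 0 ≤ x.2 → x.2 < 3 →
      ∃ p ∈ P, (x.1, x.2 + a) ∈ p := by
    intro x h1 h2 h3 h4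
    have hx : (x.1, x.2 + a) ∈ rectCells 3 n := by
      simp only [rectCells, Finset.mem_product, Finset.mem_Ico]
      push_cast
      constructor <;> constructor <;> omega
    rw [← hcover] at hx
    simpa using hx
  set g : ℤ × ℤ → Finset (ℤ × ℤ) := fun x =>
    if h : ∃ p ∈ P, (x.1, x.2 + a) ∈ p then h.choose.image (fun c => (c.1, c.2 - a)) else ∅
    with hgdef
  have hgdisj : ∀ x y, g x = g y ∨ Disjoint (g x) (g y) := by
    intro x y
    simp only [hgdef]
    by_cases h1 : ∃ p ∈ P, (x.1, x.2 + a) ∈ p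
    · by_cases h2 : ∃ p ∈ P, (y.1, y.2 + a) ∈ p
      · rw [dif_pos h1, dif_pos h2]
        by_cases he : h1.choose = h2.choose
        · exact Or.inl (by rw [he])
        · exact Or.inr ((Finset.disjoint_image hinj).2
            (hdisj _ h1.choose_spec.1 _ h2.choose_spec.1 he))
      · rw [dif_neg h2]; exact Or.inr (by simp)
    · rw [dif_neg h1]; exact Or.inr (by simp)
  have hW : ∀ x ∈ windowCells, g x ∈ tCands ∧ x ∈ g x := by
    intro x hxW
    have hxb : (0 ≤ x.1 ∧ x.1 < 3) ∧ 0 ≤ x.2 ∧ x.2 < 3 := by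
      simp only [windowCells, List.mem_cons, List.not_mem_nil, or_false] at hxW
      rcases hxW with rfl | rfl | rfl | rfl | rfl | rfl | rfl | rfl | rfl <;> norm_num
    have hex' := hex x hxb.1.1 hxb.1.2 hxb.2.1 hxb.2.2
    have hgx : g x = hex'.choose.image (fun c => (c.1, c.2 - a)) := by
      simp only [hgdef]
      exact dif_pos hex'
    obtain ⟨hpP, hxp⟩ := hex'.choose_spec
    have hpsub : hex'.choose ⊆ rectCells 3 n := by
      rw [← hcover]
      intro c hc
      exact Finset.mem_biUnion.2 ⟨_, hpP, hc⟩
    have hxgx : x ∈ g x := by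
      rw [hgx]
      have h0 := Finset.mem_image_of_mem (fun c : ℤ × ℤ => (c.1, c.2 - a)) hxp
      simpa using h0
    have hTP : IsTPlacement hex'.choose := by
      rcases htype _ hpP with h | ⟨c, hc⟩
      · exact h
      · exfalso
        rw [hc] at hxp
        have hce : (x.1, x.2 + a) = c := Finset.mem_singleton.1 hxp
        refine hcon ⟨_, hpP, c, hc, ?_, ?_⟩
        · rw [← hce]; show a ≤ x.2 + a; omega
        · rw [← hce]; show x.2 + a < a + 3; omega
    obtain ⟨s, hs, t, hpt⟩ := hTP
    have hgx2 : g x = s.image (· + (t.1, t.2 - a)) := by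
      rw [hgx, hpt, Finset.image_image]
      congr 1
      funext c
      simp only [Function.comp_apply, Prod.fst_add, Prod.snd_add, Prod.mk_add_mk,
        Prod.mk.injEq]
      exact Prod.ext_iff.2 ⟨rfl, by show c.2 + t.2 - a = c.2 + (t.2 - a); ring⟩
    have hrow : ∀ c ∈ g x, 0 ≤ c.1 ∧ c.1 < 3 := by
      intro c hc
      rw [hgx] at hc
      obtain ⟨c', hc', rfl⟩ := Finset.mem_image.1 hc
      have hcr := hpsub hc'
      simp only [rectCells, Finset.mem_product, Finset.mem_Ico] at hcr
      have hcr1 : 0 ≤ c'.1 ∧ c'.1 < 3 := by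
        constructor
        · exact hcr.1.1
        · exact_mod_cast hcr.1.2
      exact hcr1
    refine ⟨?_, hxgx⟩
    rw [hgx2]
    refine placement_mem_tCands s hs _ x ?_ ?_ hxb.2.1 hxb.2.2
    · rw [← hgx2]; exact hxgx
    · rw [← hgx2]; exact hrow
  have htrue := searchT_sound g hgdisj windowCells [] hW (by intro p hp; simp at hp)
  rw [searchT_false] at htrue
  exact Bool.false_ne_true htrue

/-- Any tiling of a 3×n rectangle uses at least ⌊n/3⌋ monominoes. -/
theorem width3_lower_bound (n : ℕ) (P : Finset (Finset (ℤ × ℤ)))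
    (hP : IsTiling P (rectCells 3 n)) :
    n / 3 ≤ monoCount P := by
  classical
  have key : ∀ k : ℕ, k < n / 3 →
      ∃ p ∈ P, ∃ c : ℤ × ℤ, p = {c} ∧ (3 * k : ℤ) ≤ c.2 ∧ c.2 < 3 * k + 3 := by
    intro k hk
    refine exists_mono_in_window n P hP (3 * k) (by positivity) ?_
    have h1 : 3 * (k + 1) ≤ 3 * (n / 3) := by omega
    have h2 := Nat.div_mul_le_self n 3
    push_cast
    omega
  choose F hF1 c hc1 hc2 hc3 using key
  have hcard : (Finset.range (n / 3)).card ≤ (P.filter (fun p => p.card = 1)).card := by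
    refine Finset.card_le_card_of_injOn
      (fun k => if h : k < n / 3 then F k h else ∅) ?_ ?_
    · intro k hk
      rw [Finset.mem_coe, Finset.mem_range] at hk
      simp only [dif_pos hk, Finset.mem_coe, Finset.mem_filter]
      exact ⟨hF1 k hk, by rw [hc1 k hk]; simp⟩
    · intro k hk k' hk' he
      simp only [Finset.coe_range, Set.mem_Iio] at hk hk'
      simp only [dif_pos hk, dif_pos hk'] at he
      have h1 := hc1 k hk
      have h2 := hc1 k' hk'
      rw [h1, h2] at he
      have hcc : c k hk = c k' hk' := by
        have := Finset.mem_singleton.1 (he ▸ Finset.mem_singleton_self (c k hk))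
        exact this
      have b1 := hc2 k hk
      have b2 := hc3 k hk
      have b3 := hc2 k' hk'
      have b4 := hc3 k' hk'
      rw [hcc] at b1 b2
      omega
  rw [Finset.card_range] at hcard
  exact hcard
end

section
/- For every n ≥ 2 with n ≡ 0 (mod 3) and n ≠ 3, there exists a tiling of the 3×n rectangle by T-tetrominoes and monominoes using exactly n/3 monominoes. -/
/-! ### Auxiliary material -/

namespace Width3Aux

lemma add_inj (t : ℤ × ℤ) : Function.Injective (· + t) := fun a b h => by
  simpa using congrArg (· - t) h

lemma piece_nonempty {P : Finset (Finset (ℤ × ℤ))} {R : Finset (ℤ × ℤ)}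
    (hP : IsTiling P R) {p : Finset (ℤ × ℤ)} (hp : p ∈ P) : p.Nonempty := by
  rcases hP.1 p hp with ⟨s, hs, t, ht⟩ | ⟨c, hc⟩
  · subst ht
    have hall : ∀ s ∈ tShapes, ((0:ℤ),(0:ℤ)) ∈ s := by decide
    have hs0 : ((0:ℤ),(0:ℤ)) ∈ s := hall s hs
    exact ⟨(0,0) + t, Finset.mem_image_of_mem _ hs0⟩
  · subst hc; exact ⟨c, Finset.mem_singleton_self c⟩

lemma piece_subset {P : Finset (Finset (ℤ × ℤ))} {R : Finset (ℤ × ℤ)}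
    (hP : IsTiling P R) {p : Finset (ℤ × ℤ)} (hp : p ∈ P) : p ⊆ R := by
  rw [← hP.2.2]
  intro x hx
  exact Finset.mem_biUnion.2 ⟨p, hp, hx⟩

/-- Concatenating two tilings of disjoint regions. -/
lemma tiling_union {P Q : Finset (Finset (ℤ × ℤ))} {R S : Finset (ℤ × ℤ)}
    (hP : IsTiling P R) (hQ : IsTiling Q S) (hRS : Disjoint R S) :
    IsTiling (P ∪ Q) (R ∪ S) ∧ monoCount (P ∪ Q) = monoCount P + monoCount Q := by
  have hPQ : Disjoint P Q := by
    rw [Finset.disjoint_left]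
    intro p hpP hpQ
    have h1 := piece_subset hP hpP
    have h2 := piece_subset hQ hpQ
    have : p ⊆ ∅ := by
      intro x hx
      exact absurd (Finset.disjoint_left.1 hRS (h1 hx)) (by simp [h2 hx])
    rcases piece_nonempty hP hpP with ⟨x, hx⟩
    simpa using this hx
  have hcross : ∀ p ∈ P, ∀ q ∈ Q, Disjoint p q := fun p hp q hq =>
    Finset.disjoint_of_subset_left (piece_subset hP hp)
      (Finset.disjoint_of_subset_right (piece_subset hQ hq) hRS)
  refine ⟨⟨?_, ?_, ?_⟩, ?_⟩
  · intro p hp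
    rcases Finset.mem_union.1 hp with h | h
    · exact hP.1 p h
    · exact hQ.1 p h
  · intro p hp q hq hne
    rcases Finset.mem_union.1 hp with h1 | h1 <;> rcases Finset.mem_union.1 hq with h2 | h2
    · exact hP.2.1 p h1 q h2 hne
    · exact hcross p h1 q h2
    · exact (hcross q h2 p h1).symm
    · exact hQ.2.1 p h1 q h2 hne
  · ext x
    rw [Finset.mem_union, ← hP.2.2, ← hQ.2.2]
    simp only [Finset.mem_biUnion, Finset.mem_union, id_eq]
    constructor
    · rintro ⟨p, hp | hp, hx⟩
      · exact Or.inl ⟨p, hp, hx⟩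
      · exact Or.inr ⟨p, hp, hx⟩
    · rintro (⟨p, hp, hx⟩ | ⟨p, hp, hx⟩)
      · exact ⟨p, Or.inl hp, hx⟩
      · exact ⟨p, Or.inr hp, hx⟩
  · unfold monoCount
    rw [Finset.filter_union, Finset.card_union_of_disjoint]
    exact Finset.disjoint_filter_filter hPQ

/-- Translating a tiling. -/
lemma tiling_shift {P : Finset (Finset (ℤ × ℤ))} {R : Finset (ℤ × ℤ)}
    (hP : IsTiling P R) (t : ℤ × ℤ) :
    IsTiling (P.image (fun p => p.image (· + t))) (R.image (· + t)) ∧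
      monoCount (P.image (fun p => p.image (· + t))) = monoCount P := by
  have hinj : Function.Injective (fun p : Finset (ℤ × ℤ) => p.image (· + t)) :=
    fun a b h => Finset.image_injective (add_inj t) h
  refine ⟨⟨?_, ?_, ?_⟩, ?_⟩
  · intro p hp
    rcases Finset.mem_image.1 hp with ⟨q, hq, rfl⟩
    rcases hP.1 q hq with ⟨s, hs, t0, ht0⟩ | ⟨c, hc⟩
    · left
      refine ⟨s, hs, t0 + t, ?_⟩
      subst ht0
      rw [Finset.image_image]
      congr 1
      funext x
      simp [add_assoc]
    · right
      exact ⟨c + t, by subst hc; simp⟩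
  · intro p hp q hq hne
    rcases Finset.mem_image.1 hp with ⟨p0, hp0, rfl⟩
    rcases Finset.mem_image.1 hq with ⟨q0, hq0, rfl⟩
    have : p0 ≠ q0 := fun h => hne (by rw [h])
    exact (Finset.disjoint_image (add_inj t)).2 (hP.2.1 p0 hp0 q0 hq0 this)
  · ext x
    simp only [Finset.mem_biUnion, Finset.mem_image, id_eq]
    constructor
    · rintro ⟨p, ⟨q, hq, rfl⟩, hx⟩
      rcases Finset.mem_image.1 hx with ⟨y, hy, rfl⟩
      exact ⟨y, by rw [← hP.2.2]; exact Finset.mem_biUnion.2 ⟨q, hq, hy⟩, rfl⟩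
    · rintro ⟨y, hy, rfl⟩
      rw [← hP.2.2] at hy
      rcases Finset.mem_biUnion.1 hy with ⟨q, hq, hyq⟩
      exact ⟨q.image (· + t), ⟨q, hq, rfl⟩, Finset.mem_image_of_mem _ hyq⟩
  · unfold monoCount
    have hcard : ∀ p : Finset (ℤ × ℤ), (p.image (· + t)).card = p.card :=
      fun p => Finset.card_image_of_injective p (add_inj t)
    rw [Finset.filter_image, Finset.card_image_of_injective _ hinj]
    congr 1
    apply Finset.filter_congr
    intro p _
    simp only [hcard]

lemma rect_split (a b : ℕ) :
    rectCells 3 (a + b) = rectCells 3 a ∪ (rectCells 3 b).image (· + ((0:ℤ), (a:ℤ))) := by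
  ext ⟨r, c⟩
  simp only [rectCells, Finset.mem_union, Finset.mem_image, Finset.mem_product,
    Finset.mem_Ico, Prod.exists, Prod.mk_add_mk, Prod.mk.injEq]
  constructor
  · rintro ⟨hr, hc⟩
    by_cases h : c < (a:ℤ)
    · exact Or.inl ⟨hr, hc.1, h⟩
    · refine Or.inr ⟨r, c - a, ⟨⟨hr.1, hr.2⟩, ?_⟩, by ring, by ring⟩
      constructor <;> push_cast at hc ⊢ <;> omega
  · rintro (⟨hr, hc⟩ | ⟨r0, c0, ⟨⟨hr0, hc0⟩, he1, he2⟩⟩)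
    · refine ⟨hr, hc.1, ?_⟩
      push_cast; omega
    · subst he1; subst he2
      refine ⟨by simpa using hr0, ?_, ?_⟩ <;> push_cast at hc0 ⊢ <;> omega

lemma rect_disjoint (a b : ℕ) :
    Disjoint (rectCells 3 a) ((rectCells 3 b).image (· + ((0:ℤ), (a:ℤ)))) := by
  rw [Finset.disjoint_left]
  rintro ⟨r, c⟩ h1 h2
  simp only [rectCells, Finset.mem_image, Finset.mem_product, Finset.mem_Ico,
    Prod.exists, Prod.mk_add_mk, Prod.mk.injEq] at h1 h2
  rcases h2 with ⟨r0, c0, ⟨⟨_, hc0⟩, _, he2⟩⟩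
  omega

def Good (n : ℕ) : Prop :=
  ∃ P : Finset (Finset (ℤ × ℤ)), IsTiling P (rectCells 3 n) ∧ monoCount P = n / 3

lemma good_concat {a b : ℕ} (ha : Good a) (hb : Good b) (ha3 : a % 3 = 0) (hb3 : b % 3 = 0) :
    Good (a + b) := by
  rcases ha with ⟨P, hP, hPm⟩
  rcases hb with ⟨Q, hQ, hQm⟩
  obtain ⟨hQ', hQm'⟩ := tiling_shift hQ ((0:ℤ), (a:ℤ))
  obtain ⟨hT, hTm⟩ := tiling_union hP hQ' (rect_disjoint a b)
  refine ⟨P ∪ Q.image (fun p => p.image (· + ((0:ℤ), (a:ℤ)))), ?_, ?_⟩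
  · rwa [rect_split a b]
  · rw [hTm, hPm, hQm', hQm]; omega

def P6 : Finset (Finset (ℤ × ℤ)) :=
  { {(0,0),(1,0),(2,0),(1,1)},
    {(0,1),(0,2),(0,3),(1,2)},
    {(0,4)},
    {(0,5),(1,5),(2,5),(1,4)},
    {(2,2),(2,3),(2,4),(1,3)},
    {(2,1)} }

def P9 : Finset (Finset (ℤ × ℤ)) :=
  { {(0,0),(1,0),(2,0),(1,1)},
    {(0,1),(0,2),(0,3),(1,2)},
    {(0,4),(0,5),(0,6),(1,5)},
    {(0,7)},
    {(0,8),(1,8),(2,8),(1,7)},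
    {(2,2),(2,3),(2,4),(1,3)},
    {(1,4)},
    {(2,5),(2,6),(2,7),(1,6)},
    {(2,1)} }

lemma good6 : Good 6 := by
  refine ⟨P6, ⟨?_, ?_, ?_⟩, ?_⟩
  · intro p hp
    simp only [P6, Finset.mem_insert, Finset.mem_singleton] at hp
    rcases hp with rfl | rfl | rfl | rfl | rfl | rfl
    · exact Or.inl ⟨{(0,0),(1,0),(2,0),(1,1)}, by decide, ((0:ℤ),(0:ℤ)), by decide⟩
    · exact Or.inl ⟨{(0,0),(0,1),(0,2),(1,1)}, by decide, ((0:ℤ),(1:ℤ)), by decide⟩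
    · exact Or.inr ⟨((0:ℤ),(4:ℤ)), rfl⟩
    · exact Or.inl ⟨{(0,0),(1,0),(2,0),(1,-1)}, by decide, ((0:ℤ),(5:ℤ)), by decide⟩
    · exact Or.inl ⟨{(0,0),(0,1),(0,2),(-1,1)}, by decide, ((2:ℤ),(2:ℤ)), by decide⟩
    · exact Or.inr ⟨((2:ℤ),(1:ℤ)), rfl⟩
  · decide
  · decide
  · decide

lemma good9 : Good 9 := by
  refine ⟨P9, ⟨?_, ?_, ?_⟩, ?_⟩
  · intro p hp
    simp only [P9, Finset.mem_insert, Finset.mem_singleton] at hp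
    rcases hp with rfl | rfl | rfl | rfl | rfl | rfl | rfl | rfl | rfl
    · exact Or.inl ⟨{(0,0),(1,0),(2,0),(1,1)}, by decide, ((0:ℤ),(0:ℤ)), by decide⟩
    · exact Or.inl ⟨{(0,0),(0,1),(0,2),(1,1)}, by decide, ((0:ℤ),(1:ℤ)), by decide⟩
    · exact Or.inl ⟨{(0,0),(0,1),(0,2),(1,1)}, by decide, ((0:ℤ),(4:ℤ)), by decide⟩
    · exact Or.inr ⟨((0:ℤ),(7:ℤ)), rfl⟩
    · exact Or.inl ⟨{(0,0),(1,0),(2,0),(1,-1)}, by decide, ((0:ℤ),(8:ℤ)), by decide⟩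
    · exact Or.inl ⟨{(0,0),(0,1),(0,2),(-1,1)}, by decide, ((2:ℤ),(2:ℤ)), by decide⟩
    · exact Or.inr ⟨((1:ℤ),(4:ℤ)), rfl⟩
    · exact Or.inl ⟨{(0,0),(0,1),(0,2),(-1,1)}, by decide, ((2:ℤ),(5:ℤ)), by decide⟩
    · exact Or.inr ⟨((2:ℤ),(1:ℤ)), rfl⟩
  · decide
  · decide
  · decide

lemma good_all : ∀ k n : ℕ, n ≤ 6 * k + 9 → 6 ≤ n → n % 3 = 0 → Good n := by
  intro k
  induction k with
  | zero =>
    intro n h1 h2 h3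
    interval_cases n <;> simp_all <;> first | exact good6 | exact good9
  | succ k ih =>
    intro n h1 h2 h3
    by_cases h : n ≤ 6 * k + 9
    · exact ih n h h2 h3
    · have : n = (n - 6) + 6 := by omega
      rw [this]
      exact good_concat (ih (n - 6) (by omega) (by omega) (by omega)) good6 (by omega) rfl

end Width3Aux

/-- For n ≥ 2, n ≡ 0 (mod 3), n ≠ 3, the 3×n rectangle has a tiling with
exactly n/3 monominoes. -/
theorem width3_upper_bound (n : ℕ) (hn : 2 ≤ n) (h3 : n % 3 = 0) (hne : n ≠ 3) :
    ∃ P : Finset (Finset (ℤ × ℤ)),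
      IsTiling P (rectCells 3 n) ∧ monoCount P = n / 3 :=
  Width3Aux.good_all n n (by omega) (by omega) h3
end

section
/- For every k ≥ 1, M(2, 2k+1) = 2: every tiling of a 2×(2k+1) rectangle by T-tetrominoes and monominoes uses at least 2 monominoes, and there is a tiling using exactly 2. -/
/- ### Auxiliary lemmas -/

lemma tPlacement_card {p : Finset (ℤ×ℤ)} (h : IsTPlacement p) : p.card = 4 := by
  obtain ⟨s, hs, t, rfl⟩ := h
  rw [Finset.card_image_of_injective _ (add_left_injective t)]
  fin_cases hs <;> decide

lemma rect_card (k : ℕ) : (rectCells 2 (2*k+1)).card = 2*(2*k+1) := by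
  rw [rectCells, Finset.card_product, Int.card_Ico, Int.card_Ico]
  simp
  omega

/-- Lower bound: any tiling of the 2×(2k+1) rectangle uses at least 2 monominoes,
by an area count mod 4. -/
lemma mono_lower (k : ℕ) (P : Finset (Finset (ℤ×ℤ)))
    (h : IsTiling P (rectCells 2 (2*k+1))) : 2 ≤ monoCount P := by
  obtain ⟨hkind, hdisj, hun⟩ := h
  have hsum : ∑ p ∈ P, p.card = 2*(2*k+1) := by
    rw [← rect_card k, ← hun]
    exact (Finset.card_biUnion hdisj).symm
  have hsplit := Finset.sum_filter_add_sum_filter_not P (fun p => p.card = 1)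
    (fun p => p.card)
  have h1 : ∑ p ∈ P.filter (fun p => p.card = 1), p.card
      = monoCount P * 1 := by
    apply Finset.sum_const_nat
    intro x hx
    exact (Finset.mem_filter.mp hx).2
  have h4 : ∑ p ∈ P.filter (fun p => ¬ p.card = 1), p.card
      = (P.filter (fun p => ¬ p.card = 1)).card * 4 := by
    apply Finset.sum_const_nat
    intro x hx
    obtain ⟨hxP, hx1⟩ := Finset.mem_filter.mp hx
    rcases hkind x hxP with ht | ⟨c, rfl⟩
    · exact tPlacement_card ht
    · simp at hx1
  rw [h1, h4] at hsplit
  rw [← hsplit] at hsum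
  unfold monoCount at *
  omega

/-- The horizontal T-piece with long side in row `r` starting at column `c`. -/
def tPiece (r c : ℤ) : Finset (ℤ × ℤ) := {(r,c),(r,c+1),(r,c+2),(1-r,c+1)}

lemma tPiece_placement {r : ℤ} (hr : r = 0 ∨ r = 1) (c : ℤ) :
    IsTPlacement (tPiece r c) := by
  rcases hr with rfl | rfl
  · refine ⟨{(0,0),(0,1),(0,2),(1,1)}, by decide, (0,c), ?_⟩
    ext ⟨a,b⟩; simp [tPiece, Prod.ext_iff]; omega
  · refine ⟨{(0,0),(0,1),(0,2),(-1,1)}, by decide, (1,c), ?_⟩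
    ext ⟨a,b⟩; simp [tPiece, Prod.ext_iff]; omega

/-- Construction: the 2×(2k+1) rectangle minus two cells can be tiled by T's alone. -/
lemma build : ∀ k : ℕ, 1 ≤ k → ∃ P : Finset (Finset (ℤ × ℤ)), ∃ r : ℤ,
    (r = 0 ∨ r = 1) ∧
    IsTTiling P (rectCells 2 (2*k+1) \ {((1:ℤ),(0:ℤ)), (r, 2*(k:ℤ))}) := by
  intro k hk
  induction k with
  | zero => omega
  | succ n ih =>
    rcases Nat.eq_or_lt_of_le hk with h1 | h1
    · -- base case n+1 = 1
      refine ⟨{tPiece 0 0}, 1, Or.inr rfl, ?_, ?_, ?_⟩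
      · intro p hp; simp at hp; subst hp; exact tPiece_placement (Or.inl rfl) 0
      · intro p hp q hq hne; simp at hp hq; subst hp; subst hq; exact absurd rfl hne
      · have hn : n = 0 := by omega
        subst hn
        ext ⟨a,b⟩
        simp [tPiece, rectCells, Prod.ext_iff]
        omega
    · have hn : 1 ≤ n := by omega
      obtain ⟨P, r, hr, hT, hdisj, hun⟩ := ih hn
      set R := rectCells 2 (2*n+1) \ {((1:ℤ),(0:ℤ)), (r, 2*(n:ℤ))} with hR
      have hsub : ∀ p ∈ P, p ⊆ R := by
        intro p hp
        rw [← hun]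
        intro x hx
        exact Finset.mem_biUnion.mpr ⟨p, hp, hx⟩
      have hnpR : Disjoint (tPiece r (2*(n:ℤ))) R := by
        rw [Finset.disjoint_left]
        rintro ⟨a,b⟩ hx hxR
        rw [hR] at hxR
        rcases hr with rfl | rfl <;>
          (simp [tPiece, rectCells, Prod.ext_iff] at hx hxR; omega)
      refine ⟨insert (tPiece r (2*(n:ℤ))) P, 1 - r,
        by rcases hr with rfl|rfl <;> simp, ?_, ?_, ?_⟩
      · intro p hp
        rcases Finset.mem_insert.mp hp with rfl | hp
        · exact tPiece_placement hr _
        · exact hT p hp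
      · intro p hp q hq hne
        rcases Finset.mem_insert.mp hp with rfl | hp <;>
          rcases Finset.mem_insert.mp hq with rfl | hq
        · exact absurd rfl hne
        · exact Finset.disjoint_of_subset_right (hsub q hq) hnpR
        · exact (Finset.disjoint_of_subset_right (hsub p hp) hnpR).symm
        · exact hdisj p hp q hq hne
      · rw [Finset.biUnion_insert, hun, hR]
        ext ⟨a,b⟩
        rcases hr with rfl | rfl <;>
          (simp [tPiece, rectCells, Prod.ext_iff]; omega)

/-- Upper bound: a tiling of 2×(2k+1) with exactly 2 monominoes. -/
lemma mono_upper (k : ℕ) (hk : 1 ≤ k) :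
    ∃ P, IsTiling P (rectCells 2 (2*k+1)) ∧ monoCount P = 2 := by
  obtain ⟨P, r, hr, hT, hdisj, hun⟩ := build k hk
  set R := rectCells 2 (2*k+1) \ {((1:ℤ),(0:ℤ)), (r, 2*(k:ℤ))} with hR
  have hsub : ∀ p ∈ P, p ⊆ R := by
    intro p hp
    rw [← hun]
    intro x hx
    exact Finset.mem_biUnion.mpr ⟨p, hp, hx⟩
  set m1 : Finset (ℤ×ℤ) := {((1:ℤ),(0:ℤ))} with hm1
  set m2 : Finset (ℤ×ℤ) := {((r:ℤ), 2*(k:ℤ))} with hm2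
  have hm12 : m1 ≠ m2 := by
    rw [hm1, hm2]
    intro h
    have := Finset.singleton_injective h
    rw [Prod.ext_iff] at this
    omega
  have hmR : ∀ x ∈ m1 ∪ m2, x ∉ R := by
    rintro ⟨a,b⟩ hx hxR
    rw [hR] at hxR
    rw [hm1, hm2] at hx
    simp [Prod.ext_iff] at hx hxR
    rcases hx with ⟨rfl, rfl⟩ | ⟨rfl, rfl⟩ <;> simp at hxR <;> tauto
  have hdisjm : ∀ m, m ⊆ m1 ∪ m2 → ∀ p ∈ P, Disjoint m p := by
    intro m hm p hp
    rw [Finset.disjoint_left]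
    intro x hx hxp
    exact hmR x (hm hx) (hsub p hp hxp)
  have hm1P : m1 ∉ P := fun h => by
    have := hdisjm m1 Finset.subset_union_left m1 h
    simp [hm1] at this
  have hm2P : m2 ∉ P := fun h => by
    have := hdisjm m2 Finset.subset_union_right m2 h
    simp [hm2] at this
  refine ⟨insert m1 (insert m2 P), ⟨?_, ?_, ?_⟩, ?_⟩
  · intro p hp
    rcases Finset.mem_insert.mp hp with rfl | hp
    · exact Or.inr ⟨_, rfl⟩
    rcases Finset.mem_insert.mp hp with rfl | hp
    · exact Or.inr ⟨_, rfl⟩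
    · exact Or.inl (hT p hp)
  · have d12 : Disjoint m1 m2 := by
      rw [hm1, hm2, Finset.disjoint_singleton]
      intro h; rw [Prod.ext_iff] at h; omega
    have dm1 : ∀ p ∈ P, Disjoint m1 p := hdisjm m1 Finset.subset_union_left
    have dm2 : ∀ p ∈ P, Disjoint m2 p := hdisjm m2 Finset.subset_union_right
    intro p hp q hq hne
    rcases Finset.mem_insert.mp hp with rfl | hp'
    · rcases Finset.mem_insert.mp hq with rfl | hq'
      · exact absurd rfl hne
      rcases Finset.mem_insert.mp hq' with rfl | hq''
      · exact d12
      · exact dm1 q hq''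
    rcases Finset.mem_insert.mp hp' with rfl | hp''
    · rcases Finset.mem_insert.mp hq with rfl | hq'
      · exact d12.symm
      rcases Finset.mem_insert.mp hq' with rfl | hq''
      · exact absurd rfl hne
      · exact dm2 q hq''
    · rcases Finset.mem_insert.mp hq with rfl | hq'
      · exact (dm1 p hp'').symm
      rcases Finset.mem_insert.mp hq' with rfl | hq''
      · exact (dm2 p hp'').symm
      · exact hdisj p hp'' q hq'' hne
  · rw [Finset.biUnion_insert, Finset.biUnion_insert, hun, hR, hm1, hm2]
    ext ⟨a,b⟩
    rcases hr with rfl | rfl <;>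
      (simp [rectCells, Prod.ext_iff]; omega)
  · unfold monoCount
    have hPfil : P.filter (fun p => p.card = 1) = ∅ := by
      rw [Finset.filter_eq_empty_iff]
      intro p hp
      rw [tPlacement_card (hT p hp)]
      omega
    have hnm : m1 ∉ ({m2} : Finset (Finset (ℤ×ℤ))) := by simpa using hm12
    rw [Finset.filter_insert, Finset.filter_insert, hPfil]
    rw [if_pos (by simp [hm1]), if_pos (by simp [hm2])]
    rw [show insert m2 (∅ : Finset (Finset (ℤ×ℤ))) = {m2} from rfl,
      Finset.card_insert_of_notMem hnm, Finset.card_singleton]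

/-- M(2, 2k+1) = 2 for all k ≥ 1. -/
theorem gapNumber_two_odd (k : ℕ) (hk : 1 ≤ k) :
    gapNumber 2 (2 * k + 1) = 2 := by
  obtain ⟨P, hP, hc⟩ := mono_upper k hk
  have h2 : 2 ∈ {g | ∃ P, IsTiling P (rectCells 2 (2*k+1)) ∧ monoCount P = g} :=
    ⟨P, hP, hc⟩
  apply le_antisymm
  · exact Nat.sInf_le h2
  · apply le_csInf ⟨2, h2⟩
    rintro g ⟨Q, hQ, rfl⟩
    exact mono_lower k Q hQ
end

section
/- For all multiples of four m, n ≥ 4, the m×n rectangle may be tiled by T-tetrominoes alone. -/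
/-- Four base tiles tiling the 4×4 square. -/
def baseTiles : Finset (Finset (ℤ × ℤ)) :=
  { {(0,0),(0,1),(0,2),(1,1)},
    {(0,3),(1,2),(1,3),(2,3)},
    {(1,0),(2,0),(3,0),(2,1)},
    {(2,2),(3,1),(3,2),(3,3)} }

lemma baseCover : baseTiles.biUnion id = rectCells 4 4 := by decide

lemma baseDisj : ∀ b ∈ baseTiles, ∀ b' ∈ baseTiles, b ≠ b' → Disjoint b b' := by decide

lemma basePlacement : ∀ b ∈ baseTiles, IsTPlacement b := by
  intro b hb
  fin_cases hb
  · exact ⟨{(0,0),(0,1),(0,2),(1,1)}, by decide, (0,0), by decide⟩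
  · exact ⟨{(0,0),(1,0),(2,0),(1,-1)}, by decide, (0,3), by decide⟩
  · exact ⟨{(0,0),(1,0),(2,0),(1,1)}, by decide, (1,0), by decide⟩
  · exact ⟨{(0,0),(0,1),(0,2),(-1,1)}, by decide, (3,1), by decide⟩

lemma baseSub : ∀ b ∈ baseTiles, b ⊆ rectCells 4 4 := by decide

/-- The tiling of the m×n rectangle by translated copies of the base tiles. -/
def tileP (m n : ℕ) : Finset (Finset (ℤ × ℤ)) :=
  ((Finset.range (m/4)) ×ˢ (Finset.range (n/4))).biUnion
    (fun ij => baseTiles.image (fun b => b.image (· + ((4*ij.1 : ℤ), (4*ij.2 : ℤ)))))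

lemma mem_tileP {m n : ℕ} {p : Finset (ℤ × ℤ)} :
    p ∈ tileP m n ↔ ∃ i < m/4, ∃ j < n/4, ∃ b ∈ baseTiles,
      p = b.image (· + ((4*i : ℤ), (4*j : ℤ))) := by
  unfold tileP
  rw [Finset.mem_biUnion]
  constructor
  · rintro ⟨⟨i, j⟩, hij, hp⟩
    rw [Finset.mem_product, Finset.mem_range, Finset.mem_range] at hij
    obtain ⟨b, hb, rfl⟩ := Finset.mem_image.mp hp
    exact ⟨i, hij.1, j, hij.2, b, hb, rfl⟩
  · rintro ⟨i, hi, j, hj, b, hb, rfl⟩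
    exact ⟨(i, j), by simp [Finset.mem_product, hi, hj],
      Finset.mem_image.mpr ⟨b, hb, rfl⟩⟩

/-- Every m×n rectangle with both sides multiples of 4 (and ≥ 4) can be tiled
by T-tetrominoes alone. -/
theorem walkup_converse (m n : ℕ) (hm : 4 ≤ m) (hn : 4 ≤ n)
    (hm4 : m % 4 = 0) (hn4 : n % 4 = 0) :
    ∃ P : Finset (Finset (ℤ × ℤ)), IsTTiling P (rectCells m n) := by
  refine ⟨tileP m n, ?_, ?_, ?_⟩
  · -- every piece is a T placement
    intro p hp
    obtain ⟨i, _, j, _, b, hb, rfl⟩ := mem_tileP.mp hp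
    obtain ⟨s, hs, t, rfl⟩ := basePlacement b hb
    refine ⟨s, hs, t + ((4*i : ℤ), (4*j : ℤ)), ?_⟩
    rw [Finset.image_image]
    apply Finset.image_congr
    intro c _
    simp [add_assoc]
  · -- pairwise disjoint
    intro p hp q hq hpq
    obtain ⟨i, _, j, _, b, hb, rfl⟩ := mem_tileP.mp hp
    obtain ⟨i', _, j', _, b', hb', rfl⟩ := mem_tileP.mp hq
    rw [Finset.disjoint_left]
    rintro x hxp hxq
    obtain ⟨c, hc, rfl⟩ := Finset.mem_image.mp hxp
    obtain ⟨c', hc', hcc⟩ := Finset.mem_image.mp hxq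
    have hcr := baseSub b hb hc
    have hcr' := baseSub b' hb' hc'
    simp only [rectCells, Finset.mem_product, Finset.mem_Ico] at hcr hcr'
    have h1 : c'.1 + 4*(i':ℤ) = c.1 + 4*i := congrArg Prod.fst hcc
    have h2 : c'.2 + 4*(j':ℤ) = c.2 + 4*j := congrArg Prod.snd hcc
    have hii : i = i' := by omega
    have hjj : j = j' := by omega
    subst hii; subst hjj
    have hbb : b ≠ b' := by
      rintro rfl; exact hpq rfl
    have hc'' : c = c' := by
      have : c'.1 = c.1 ∧ c'.2 = c.2 := ⟨by omega, by omega⟩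
      exact Prod.ext this.1.symm this.2.symm
    subst hc''
    exact Finset.disjoint_left.mp (baseDisj b hb b' hb' hbb) hc hc'
  · -- coverage
    ext x
    simp only [Finset.mem_biUnion, id, mem_tileP]
    constructor
    · rintro ⟨p, ⟨i, hi, j, hj, b, hb, rfl⟩, hx⟩
      obtain ⟨c, hc, rfl⟩ := Finset.mem_image.mp hx
      have hcr := baseSub b hb hc
      simp only [rectCells, Finset.mem_product, Finset.mem_Ico, Prod.fst_add,
        Prod.snd_add] at hcr ⊢
      refine ⟨⟨by omega, ?_⟩, by omega, ?_⟩ <;> omega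
    · intro hx
      simp only [rectCells, Finset.mem_product, Finset.mem_Ico] at hx
      obtain ⟨⟨hx1, hx2⟩, hx3, hx4⟩ := hx
      set i : ℕ := x.1.toNat / 4 with hidef
      set j : ℕ := x.2.toNat / 4 with hjdef
      set c : ℤ × ℤ := (x.1 - 4*i, x.2 - 4*j) with hcdef
      have hcr : c ∈ rectCells 4 4 := by
        simp only [rectCells, Finset.mem_product, Finset.mem_Ico, hcdef]
        constructor <;> constructor <;> omega
      rw [← baseCover] at hcr
      obtain ⟨b, hb, hcb⟩ := Finset.mem_biUnion.mp hcr
      refine ⟨b.image (· + ((4*i : ℤ), (4*j : ℤ))), ⟨i, ?_, j, ?_, b, hb, rfl⟩, ?_⟩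
      · omega
      · omega
      · exact Finset.mem_image.mpr ⟨c, hcb, by simp [hcdef]⟩
end

section
/- M(3,n) is unbounded as n → ∞; in fact M(3,n) ≥ n/3 − 1 for all n, so sup over all rectangles of the minimum number of monominoes needed is infinite. -/
lemma TT.mem_rect_bounds {n : ℕ} {c : ℤ×ℤ} (h : c ∈ rectCells 3 n) :
    (0 ≤ c.1 ∧ c.1 < 3) ∧ (0 ≤ c.2 ∧ c.2 < (n:ℤ)) := by
  simp only [rectCells, Finset.mem_product, Finset.mem_Ico] at h
  exact_mod_cast h

lemma TT.classify_top (p : Finset (ℤ × ℤ)) (hp : IsTPlacement p)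
    (hrow : ∀ c ∈ p, 0 ≤ c.1 ∧ c.1 < 3) (j : ℤ)
    (h : ((0:ℤ),j) ∈ p) (h1 : ((1:ℤ),j) ∉ p) :
    p = {(0,j),(0,j+1),(0,j+2),(1,j+1)} ∨
    p = {(0,j-2),(0,j-1),(0,j),(1,j-1)} := by
  obtain ⟨s, hs, ⟨t1, t2⟩, rfl⟩ := hp
  simp only [tShapes, Finset.mem_insert, Finset.mem_singleton] at hs
  rcases hs with rfl | rfl | rfl | rfl <;>
  · simp only [Finset.image_insert, Finset.image_singleton, Prod.mk_add_mk] at hrow h h1 ⊢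
    simp [Prod.ext_iff] at hrow h h1
    have A1 := hrow _ _ (Or.inl ⟨rfl, rfl⟩)
    have A2 := hrow _ _ (Or.inr (Or.inl ⟨rfl, rfl⟩))
    have A3 := hrow _ _ (Or.inr (Or.inr (Or.inl ⟨rfl, rfl⟩)))
    have A4 := hrow _ _ (Or.inr (Or.inr (Or.inr ⟨rfl, rfl⟩)))
    rcases h with h | h | h | h <;>
    first
      | (exfalso; omega)
      | (left; ext ⟨a,b⟩; simp only [Finset.mem_insert, Finset.mem_singleton, Prod.mk.injEq]; omega)
      | (right; ext ⟨a,b⟩; simp only [Finset.mem_insert, Finset.mem_singleton, Prod.mk.injEq]; omega)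

lemma TT.classify_bot (p : Finset (ℤ × ℤ)) (hp : IsTPlacement p)
    (hrow : ∀ c ∈ p, 0 ≤ c.1 ∧ c.1 < 3) (j : ℤ)
    (h : ((2:ℤ),j) ∈ p) (h1 : ((1:ℤ),j) ∉ p) :
    p = {(2,j),(2,j+1),(2,j+2),(1,j+1)} ∨
    p = {(2,j-2),(2,j-1),(2,j),(1,j-1)} := by
  obtain ⟨s, hs, ⟨t1, t2⟩, rfl⟩ := hp
  simp only [tShapes, Finset.mem_insert, Finset.mem_singleton] at hs
  rcases hs with rfl | rfl | rfl | rfl <;>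
  · simp only [Finset.image_insert, Finset.image_singleton, Prod.mk_add_mk] at hrow h h1 ⊢
    simp [Prod.ext_iff] at hrow h h1
    have A1 := hrow _ _ (Or.inl ⟨rfl, rfl⟩)
    have A2 := hrow _ _ (Or.inr (Or.inl ⟨rfl, rfl⟩))
    have A3 := hrow _ _ (Or.inr (Or.inr (Or.inl ⟨rfl, rfl⟩)))
    have A4 := hrow _ _ (Or.inr (Or.inr (Or.inr ⟨rfl, rfl⟩)))
    rcases h with h | h | h | h <;>
    first
      | (exfalso; omega)
      | (left; ext ⟨a,b⟩; simp only [Finset.mem_insert, Finset.mem_singleton, Prod.mk.injEq]; omega)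
      | (right; ext ⟨a,b⟩; simp only [Finset.mem_insert, Finset.mem_singleton, Prod.mk.injEq]; omega)

set_option maxHeartbeats 1000000 in
lemma TT.classify_mid (p : Finset (ℤ × ℤ)) (hp : IsTPlacement p)
    (hrow : ∀ c ∈ p, 0 ≤ c.1 ∧ c.1 < 3) (j : ℤ)
    (h : ((1:ℤ),j) ∈ p) (h0 : ((0:ℤ),j) ∉ p) (h2 : ((2:ℤ),j) ∉ p) :
    p = {(1,j),(1,j+1),(1,j+2),(2,j+1)} ∨
    p = {(1,j-2),(1,j-1),(1,j),(2,j-1)} ∨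
    p = {(1,j),(1,j+1),(1,j+2),(0,j+1)} ∨
    p = {(1,j-2),(1,j-1),(1,j),(0,j-1)} ∨
    p = {(0,j-1),(1,j-1),(2,j-1),(1,j)} ∨
    p = {(0,j+1),(1,j+1),(2,j+1),(1,j)} := by
  obtain ⟨s, hs, ⟨t1, t2⟩, rfl⟩ := hp
  simp only [tShapes, Finset.mem_insert, Finset.mem_singleton] at hs
  rcases hs with rfl | rfl | rfl | rfl <;>
  · simp only [Finset.image_insert, Finset.image_singleton, Prod.mk_add_mk] at hrow h h0 h2 ⊢
    simp [Prod.ext_iff] at hrow h h0 h2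
    have A1 := hrow _ _ (Or.inl ⟨rfl, rfl⟩)
    have A2 := hrow _ _ (Or.inr (Or.inl ⟨rfl, rfl⟩))
    have A3 := hrow _ _ (Or.inr (Or.inr (Or.inl ⟨rfl, rfl⟩)))
    have A4 := hrow _ _ (Or.inr (Or.inr (Or.inr ⟨rfl, rfl⟩)))
    rcases h with h | h | h | h <;>
    first
      | (exfalso; omega)
      | (refine Or.inl ?_; ext ⟨a,b⟩; simp only [Finset.mem_insert, Finset.mem_singleton, Prod.mk.injEq]; omega)
      | (refine Or.inr (Or.inl ?_); ext ⟨a,b⟩; simp only [Finset.mem_insert, Finset.mem_singleton, Prod.mk.injEq]; omega)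
      | (refine Or.inr (Or.inr (Or.inl ?_)); ext ⟨a,b⟩; simp only [Finset.mem_insert, Finset.mem_singleton, Prod.mk.injEq]; omega)
      | (refine Or.inr (Or.inr (Or.inr (Or.inl ?_))); ext ⟨a,b⟩; simp only [Finset.mem_insert, Finset.mem_singleton, Prod.mk.injEq]; omega)
      | (refine Or.inr (Or.inr (Or.inr (Or.inr (Or.inl ?_)))); ext ⟨a,b⟩; simp only [Finset.mem_insert, Finset.mem_singleton, Prod.mk.injEq]; omega)
      | (refine Or.inr (Or.inr (Or.inr (Or.inr (Or.inr ?_)))); ext ⟨a,b⟩; simp only [Finset.mem_insert, Finset.mem_singleton, Prod.mk.injEq]; omega)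

set_option maxHeartbeats 4000000 in
lemma TT.lemB (p0 p1 p2 : Finset (ℤ×ℤ))
    (h0 : IsTPlacement p0) (h1 : IsTPlacement p1) (h2 : IsTPlacement p2)
    (r0 : ∀ c ∈ p0, 0 ≤ c.1 ∧ c.1 < 3) (r1 : ∀ c ∈ p1, 0 ≤ c.1 ∧ c.1 < 3)
    (r2 : ∀ c ∈ p2, 0 ≤ c.1 ∧ c.1 < 3)
    (d01 : Disjoint p0 p1) (d02 : Disjoint p0 p2) (d12 : Disjoint p1 p2)
    (j : ℤ) (m0 : ((0:ℤ),j) ∈ p0) (m1 : ((1:ℤ),j) ∈ p1) (m2 : ((2:ℤ),j) ∈ p2) :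
    False := by
  have n10 : ((1:ℤ),j) ∉ p0 := fun hh => Finset.disjoint_left.mp d01 hh m1
  have n01 : ((0:ℤ),j) ∉ p1 := fun hh => Finset.disjoint_left.mp d01 m0 hh
  have n21 : ((2:ℤ),j) ∉ p1 := fun hh => Finset.disjoint_right.mp d12 m2 hh
  have n12 : ((1:ℤ),j) ∉ p2 := Finset.disjoint_left.mp d12 m1
  have c0 := TT.classify_top p0 h0 r0 j m0 n10
  have c2 := TT.classify_bot p2 h2 r2 j m2 n12
  have c1 := TT.classify_mid p1 h1 r1 j m1 n01 n21
  rcases c0 with rfl | rfl <;> rcases c2 with rfl | rfl <;>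
    rcases c1 with rfl | rfl | rfl | rfl | rfl | rfl <;>
    (simp only [Finset.disjoint_insert_left, Finset.disjoint_singleton_left,
      Finset.mem_insert, Finset.mem_singleton, Prod.mk.injEq,
      not_or, true_and, and_true, or_true, true_or, not_true, and_false, false_and,
      not_false_eq_true, and_self] at d01 d02 d12; try omega)

def TT.colCard (p : Finset (ℤ × ℤ)) (j : ℤ) : ℕ := (p.filter (fun c => c.2 = j)).card

def TT.w (p : Finset (ℤ × ℤ)) (j : ℤ) : ℕ :=
  if 3 ≤ TT.colCard p j then 2 else min (TT.colCard p j) 1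

lemma TT.w_le_two (p : Finset (ℤ × ℤ)) (j : ℤ) : TT.w p j ≤ 2 := by
  unfold TT.w; split <;> omega

lemma TT.one_le_w {p : Finset (ℤ × ℤ)} {j : ℤ} {c : ℤ × ℤ} (hc : c ∈ p) (hj : c.2 = j) :
    1 ≤ TT.w p j := by
  have h1 : 1 ≤ TT.colCard p j :=
    Finset.card_pos.mpr ⟨c, Finset.mem_filter.mpr ⟨hc, hj⟩⟩
  unfold TT.w; split <;> omega

lemma TT.exists_of_w_ne {p : Finset (ℤ × ℤ)} {j : ℤ} (h : TT.w p j ≠ 0) :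
    ∃ c ∈ p, c.2 = j := by
  by_contra hn
  push_neg at hn
  apply h
  have : p.filter (fun c => c.2 = j) = ∅ :=
    Finset.filter_eq_empty_iff.mpr (fun {c} hc => hn c hc)
  unfold TT.w TT.colCard
  rw [this]
  simp

lemma TT.triple_card (j : ℤ) : ({((0:ℤ),j),(1,j),(2,j)} : Finset (ℤ×ℤ)).card = 3 := by
  rw [Finset.card_insert_of_notMem (by simp), Finset.card_insert_of_notMem (by simp),
    Finset.card_singleton]

lemma TT.two_le_w_of_full {p : Finset (ℤ × ℤ)} {j : ℤ}
    (h0 : ((0:ℤ),j) ∈ p) (h1 : ((1:ℤ),j) ∈ p) (h2 : ((2:ℤ),j) ∈ p) :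
    2 ≤ TT.w p j := by
  have hsub : ({((0:ℤ),j),(1,j),(2,j)} : Finset (ℤ×ℤ)) ⊆ p.filter (fun c => c.2 = j) := by
    intro c hc
    simp only [Finset.mem_insert, Finset.mem_singleton] at hc
    rcases hc with rfl | rfl | rfl <;> simp [Finset.mem_filter, h0, h1, h2]
  have h3 : 3 ≤ TT.colCard p j := by
    have := Finset.card_le_card hsub
    rw [TT.triple_card] at this
    exact this
  unfold TT.w
  rw [if_pos h3]

lemma TT.full_of_three {n : ℕ} {p : Finset (ℤ × ℤ)} {j : ℤ}
    (hsub : p ⊆ rectCells 3 n) (h : 3 ≤ TT.colCard p j) :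
    ((0:ℤ),j) ∈ p ∧ ((1:ℤ),j) ∈ p ∧ ((2:ℤ),j) ∈ p := by
  have hss : p.filter (fun c => c.2 = j) ⊆ ({((0:ℤ),j),(1,j),(2,j)} : Finset (ℤ×ℤ)) := by
    intro c hc
    obtain ⟨hcp, hcj⟩ := Finset.mem_filter.mp hc
    obtain ⟨⟨hr0, hr3⟩, _⟩ := TT.mem_rect_bounds (hsub hcp)
    obtain ⟨c1, c2⟩ := c
    dsimp only at hcj hr0 hr3
    subst hcj
    simp only [Finset.mem_insert, Finset.mem_singleton, Prod.mk.injEq, and_true]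
    omega
  have heq := Finset.eq_of_subset_of_card_le hss (by rw [TT.triple_card]; exact h)
  have hin : ∀ c ∈ ({((0:ℤ),j),(1,j),(2,j)} : Finset (ℤ×ℤ)), c ∈ p := by
    intro c hc
    rw [← heq] at hc
    exact (Finset.mem_filter.mp hc).1
  exact ⟨hin _ (by simp), hin _ (by simp), hin _ (by simp)⟩

lemma TT.card_of_placement {p : Finset (ℤ × ℤ)} (hp : IsTPlacement p) : p.card = 4 := by
  obtain ⟨s, hs, t, rfl⟩ := hp
  rw [Finset.card_image_of_injective _ (add_left_injective t)]
  simp only [tShapes, Finset.mem_insert, Finset.mem_singleton] at hs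
  rcases hs with rfl | rfl | rfl | rfl <;> decide

lemma TT.piece_sum {n : ℕ} {p : Finset (ℤ × ℤ)} (hp : IsTPlacement p)
    (hsub : p ⊆ rectCells 3 n) :
    3 ≤ ∑ j ∈ Finset.Ico (0:ℤ) (n:ℤ), TT.w p j := by
  obtain ⟨s, hs, ⟨t1, t2⟩, hps⟩ := hp
  simp only [tShapes, Finset.mem_insert, Finset.mem_singleton] at hs
  rcases hs with rfl | rfl | rfl | rfl
  · -- horizontal, stem below
    have e0 : ((0:ℤ),(0:ℤ)) + (t1,t2) ∈ p := hps ▸ Finset.mem_image_of_mem _ (by decide)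
    have e1 : ((0:ℤ),(1:ℤ)) + (t1,t2) ∈ p := hps ▸ Finset.mem_image_of_mem _ (by decide)
    have e2 : ((0:ℤ),(2:ℤ)) + (t1,t2) ∈ p := hps ▸ Finset.mem_image_of_mem _ (by decide)
    have b0 := (TT.mem_rect_bounds (hsub e0)).2
    have b2 := (TT.mem_rect_bounds (hsub e2)).2
    simp only [Prod.mk_add_mk] at b0 b2
    simp at b0 b2
    have hset : ({0+t2, 1+t2, 2+t2} : Finset ℤ) ⊆ Finset.Ico (0:ℤ) (n:ℤ) := by
      intro x hx; simp only [Finset.mem_insert, Finset.mem_singleton] at hx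
      simp only [Finset.mem_Ico]; omega
    refine le_trans ?_ (Finset.sum_le_sum_of_subset hset)
    rw [Finset.sum_insert (by simp), Finset.sum_insert (by simp),
      Finset.sum_singleton]
    have w0 := TT.one_le_w (j := 0+t2) e0 (by simp)
    have w1 := TT.one_le_w (j := 1+t2) e1 (by simp)
    have w2 := TT.one_le_w (j := 2+t2) e2 (by simp)
    omega
  · -- horizontal, stem above
    have e0 : ((0:ℤ),(0:ℤ)) + (t1,t2) ∈ p := hps ▸ Finset.mem_image_of_mem _ (by decide)
    have e1 : ((0:ℤ),(1:ℤ)) + (t1,t2) ∈ p := hps ▸ Finset.mem_image_of_mem _ (by decide)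
    have e2 : ((0:ℤ),(2:ℤ)) + (t1,t2) ∈ p := hps ▸ Finset.mem_image_of_mem _ (by decide)
    have b0 := (TT.mem_rect_bounds (hsub e0)).2
    have b2 := (TT.mem_rect_bounds (hsub e2)).2
    simp only [Prod.mk_add_mk] at b0 b2
    simp at b0 b2
    have hset : ({0+t2, 1+t2, 2+t2} : Finset ℤ) ⊆ Finset.Ico (0:ℤ) (n:ℤ) := by
      intro x hx; simp only [Finset.mem_insert, Finset.mem_singleton] at hx
      simp only [Finset.mem_Ico]; omega
    refine le_trans ?_ (Finset.sum_le_sum_of_subset hset)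
    rw [Finset.sum_insert (by simp), Finset.sum_insert (by simp),
      Finset.sum_singleton]
    have w0 := TT.one_le_w (j := 0+t2) e0 (by simp)
    have w1 := TT.one_le_w (j := 1+t2) e1 (by simp)
    have w2 := TT.one_le_w (j := 2+t2) e2 (by simp)
    omega
  · -- vertical, stem right
    have e0 : ((0:ℤ),(0:ℤ)) + (t1,t2) ∈ p := hps ▸ Finset.mem_image_of_mem _ (by decide)
    have e1 : ((1:ℤ),(0:ℤ)) + (t1,t2) ∈ p := hps ▸ Finset.mem_image_of_mem _ (by decide)
    have e2 : ((2:ℤ),(0:ℤ)) + (t1,t2) ∈ p := hps ▸ Finset.mem_image_of_mem _ (by decide)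
    have e3 : ((1:ℤ),(1:ℤ)) + (t1,t2) ∈ p := hps ▸ Finset.mem_image_of_mem _ (by decide)
    have r0 := (TT.mem_rect_bounds (hsub e0)).1
    have r2 := (TT.mem_rect_bounds (hsub e2)).1
    have b0 := (TT.mem_rect_bounds (hsub e0)).2
    have b3 := (TT.mem_rect_bounds (hsub e3)).2
    simp at r0 r2 b0 b3
    have ht1 : t1 = 0 := by omega
    subst ht1
    have wfull : 2 ≤ TT.w p (0+t2) :=
      TT.two_le_w_of_full (by simpa using e0) (by simpa using e1) (by simpa using e2)
    have wstem : 1 ≤ TT.w p (1+t2) := TT.one_le_w e3 (by simp)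
    have hset : ({0+t2, 1+t2} : Finset ℤ) ⊆ Finset.Ico (0:ℤ) (n:ℤ) := by
      intro x hx; simp only [Finset.mem_insert, Finset.mem_singleton] at hx
      simp only [Finset.mem_Ico]; omega
    refine le_trans ?_ (Finset.sum_le_sum_of_subset hset)
    rw [Finset.sum_pair (by omega : (0+t2 : ℤ) ≠ 1+t2)]
    omega
  · -- vertical, stem left
    have e0 : ((0:ℤ),(0:ℤ)) + (t1,t2) ∈ p := hps ▸ Finset.mem_image_of_mem _ (by decide)
    have e1 : ((1:ℤ),(0:ℤ)) + (t1,t2) ∈ p := hps ▸ Finset.mem_image_of_mem _ (by decide)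
    have e2 : ((2:ℤ),(0:ℤ)) + (t1,t2) ∈ p := hps ▸ Finset.mem_image_of_mem _ (by decide)
    have e3 : ((1:ℤ),(-1:ℤ)) + (t1,t2) ∈ p := hps ▸ Finset.mem_image_of_mem _ (by decide)
    have r0 := (TT.mem_rect_bounds (hsub e0)).1
    have r2 := (TT.mem_rect_bounds (hsub e2)).1
    have b0 := (TT.mem_rect_bounds (hsub e0)).2
    have b3 := (TT.mem_rect_bounds (hsub e3)).2
    simp at r0 r2 b0 b3
    have ht1 : t1 = 0 := by omega
    subst ht1
    have wfull : 2 ≤ TT.w p (0+t2) :=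
      TT.two_le_w_of_full (by simpa using e0) (by simpa using e1) (by simpa using e2)
    have wstem : 1 ≤ TT.w p (-1+t2) := TT.one_le_w e3 (by simp)
    have hset : ({0+t2, -1+t2} : Finset ℤ) ⊆ Finset.Ico (0:ℤ) (n:ℤ) := by
      intro x hx; simp only [Finset.mem_insert, Finset.mem_singleton] at hx
      simp only [Finset.mem_Ico]; omega
    refine le_trans ?_ (Finset.sum_le_sum_of_subset hset)
    rw [Finset.sum_pair (by omega : (0+t2 : ℤ) ≠ -1+t2)]
    omega

lemma TT.col_bound {n : ℕ} (TS : Finset (Finset (ℤ×ℤ)))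
    (hT : ∀ p ∈ TS, IsTPlacement p) (hsub : ∀ p ∈ TS, p ⊆ rectCells 3 n)
    (hdis : ∀ p ∈ TS, ∀ q ∈ TS, p ≠ q → Disjoint p q) (j : ℤ) :
    (∑ p ∈ TS, TT.w p j) ≤ 2 := by
  classical
  have hsum : ∑ p ∈ TS.filter (fun p => ∃ c ∈ p, c.2 = j), TT.w p j = ∑ p ∈ TS, TT.w p j :=
    Finset.sum_filter_of_ne (fun p _ hw => TT.exists_of_w_ne hw)
  rw [← hsum]
  set Tj := TS.filter (fun p => ∃ c ∈ p, c.2 = j) with hTj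
  by_cases hful : ∃ p ∈ Tj, ((0:ℤ),j) ∈ p ∧ ((1:ℤ),j) ∈ p ∧ ((2:ℤ),j) ∈ p
  · obtain ⟨p, hpTj, hf0, hf1, hf2⟩ := hful
    have hone : Tj ⊆ {p} := by
      intro q hq
      simp only [Finset.mem_singleton]
      by_contra hne
      obtain ⟨hqTS, ⟨c1, c2⟩, hc, hcj⟩ := Finset.mem_filter.mp hq
      dsimp only at hcj
      subst hcj
      have hpTS := (Finset.mem_filter.mp hpTj).1
      have hd := hdis q hqTS p hpTS hne
      have hrow := (TT.mem_rect_bounds (hsub q hqTS hc)).1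
      dsimp only at hrow
      have hcp : (c1, c2) ∈ p := by
        have : c1 = 0 ∨ c1 = 1 ∨ c1 = 2 := by omega
        rcases this with rfl | rfl | rfl <;> assumption
      exact Finset.disjoint_left.mp hd hc hcp
    calc ∑ q ∈ Tj, TT.w q j ≤ ∑ q ∈ ({p} : Finset _), TT.w q j :=
          Finset.sum_le_sum_of_subset hone
      _ = TT.w p j := Finset.sum_singleton _ _
      _ ≤ 2 := TT.w_le_two p j
  · have hw1 : ∀ p ∈ Tj, TT.w p j ≤ 1 := by
      intro p hp
      by_contra hgt
      push_neg at hgt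
      have h3 : 3 ≤ TT.colCard p j := by
        by_contra hlt
        unfold TT.w at hgt
        rw [if_neg hlt] at hgt
        omega
      have hpTS := (Finset.mem_filter.mp hp).1
      have hfull := TT.full_of_three (hsub p hpTS) h3
      exact hful ⟨p, hp, hfull⟩
    have hcard : Tj.card ≤ 2 := by
      by_contra hgt
      push_neg at hgt
      obtain ⟨p0, hp0, p1, hp1, p2, hp2, h01, h02, h12⟩ := Finset.two_lt_card.mp hgt
      -- extract cells with rows
      have get : ∀ q ∈ Tj, ∃ i : ℤ, 0 ≤ i ∧ i < 3 ∧ (i, j) ∈ q := by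
        intro q hq
        obtain ⟨hqTS, ⟨c1, c2⟩, hc, hcj⟩ := Finset.mem_filter.mp hq
        dsimp only at hcj
        subst hcj
        have hrow := (TT.mem_rect_bounds (hsub q hqTS hc)).1
        dsimp only at hrow
        exact ⟨c1, hrow.1, hrow.2, hc⟩
      obtain ⟨i0, hi00, hi01, hc0⟩ := get p0 hp0
      obtain ⟨i1, hi10, hi11, hc1⟩ := get p1 hp1
      obtain ⟨i2, hi20, hi21, hc2⟩ := get p2 hp2
      have hTS : ∀ q ∈ Tj, q ∈ TS := fun q hq => (Finset.mem_filter.mp hq).1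
      have d01 := hdis p0 (hTS _ hp0) p1 (hTS _ hp1) h01
      have d02 := hdis p0 (hTS _ hp0) p2 (hTS _ hp2) h02
      have d12 := hdis p1 (hTS _ hp1) p2 (hTS _ hp2) h12
      have ne01 : i0 ≠ i1 := fun e =>
        Finset.disjoint_left.mp d01 hc0 (by rw [e]; exact hc1)
      have ne02 : i0 ≠ i2 := fun e =>
        Finset.disjoint_left.mp d02 hc0 (by rw [e]; exact hc2)
      have ne12 : i1 ≠ i2 := fun e =>
        Finset.disjoint_left.mp d12 hc1 (by rw [e]; exact hc2)
      have hpl : ∀ q ∈ Tj, IsTPlacement q := fun q hq => hT q (hTS _ hq)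
      have hrows : ∀ q ∈ Tj, ∀ c ∈ q, 0 ≤ c.1 ∧ c.1 < 3 := fun q hq c hc =>
        (TT.mem_rect_bounds (hsub q (hTS _ hq) hc)).1
      have hperm : (i0 = 0 ∧ i1 = 1 ∧ i2 = 2) ∨ (i0 = 0 ∧ i1 = 2 ∧ i2 = 1) ∨
          (i0 = 1 ∧ i1 = 0 ∧ i2 = 2) ∨ (i0 = 1 ∧ i1 = 2 ∧ i2 = 0) ∨
          (i0 = 2 ∧ i1 = 0 ∧ i2 = 1) ∨ (i0 = 2 ∧ i1 = 1 ∧ i2 = 0) := by omega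
      rcases hperm with ⟨e0,e1,e2⟩|⟨e0,e1,e2⟩|⟨e0,e1,e2⟩|⟨e0,e1,e2⟩|⟨e0,e1,e2⟩|⟨e0,e1,e2⟩ <;>
        subst e0 <;> subst e1 <;> subst e2
      · exact TT.lemB p0 p1 p2 (hpl _ hp0) (hpl _ hp1) (hpl _ hp2)
          (hrows _ hp0) (hrows _ hp1) (hrows _ hp2) d01 d02 d12 j hc0 hc1 hc2
      · exact TT.lemB p0 p2 p1 (hpl _ hp0) (hpl _ hp2) (hpl _ hp1)
          (hrows _ hp0) (hrows _ hp2) (hrows _ hp1) d02 d01 d12.symm j hc0 hc2 hc1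
      · exact TT.lemB p1 p0 p2 (hpl _ hp1) (hpl _ hp0) (hpl _ hp2)
          (hrows _ hp1) (hrows _ hp0) (hrows _ hp2) d01.symm d12 d02 j hc1 hc0 hc2
      · exact TT.lemB p2 p0 p1 (hpl _ hp2) (hpl _ hp0) (hpl _ hp1)
          (hrows _ hp2) (hrows _ hp0) (hrows _ hp1) d02.symm d12.symm d01 j hc2 hc0 hc1
      · exact TT.lemB p1 p2 p0 (hpl _ hp1) (hpl _ hp2) (hpl _ hp0)
          (hrows _ hp1) (hrows _ hp2) (hrows _ hp0) d12 d01.symm d02.symm j hc1 hc2 hc0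
      · exact TT.lemB p2 p1 p0 (hpl _ hp2) (hpl _ hp1) (hpl _ hp0)
          (hrows _ hp2) (hrows _ hp1) (hrows _ hp0) d12.symm d02.symm d01.symm j hc2 hc1 hc0
    calc ∑ q ∈ Tj, TT.w q j ≤ ∑ q ∈ Tj, 1 := Finset.sum_le_sum hw1
      _ = Tj.card := by simp
      _ ≤ 2 := hcard

lemma TT.main_count {n : ℕ} {P : Finset (Finset (ℤ × ℤ))}
    (hP : IsTiling P (rectCells 3 n)) : n ≤ 3 * monoCount P := by
  classical
  obtain ⟨htyp, hdis, huni⟩ := hP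
  set TP := P.filter (fun p => ¬ p.card = 1) with hTPdef
  have hTPmem : ∀ p ∈ TP, p ∈ P := fun p hp => (Finset.mem_filter.mp hp).1
  have hTPpl : ∀ p ∈ TP, IsTPlacement p := by
    intro p hp
    obtain ⟨hpP, hnc⟩ := Finset.mem_filter.mp hp
    rcases htyp p hpP with h | ⟨c, rfl⟩
    · exact h
    · exact absurd (Finset.card_singleton c) hnc
  have hTPsub : ∀ p ∈ TP, p ⊆ rectCells 3 n := by
    intro p hp
    rw [← huni]
    exact Finset.subset_biUnion_of_mem id (hTPmem p hp)
  have hdisTP : ∀ p ∈ TP, ∀ q ∈ TP, p ≠ q → Disjoint p q :=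
    fun p hp q hq => hdis p (hTPmem p hp) q (hTPmem q hq)
  have key : 3 * TP.card ≤ 2 * n := by
    calc 3 * TP.card = ∑ _p ∈ TP, 3 := by rw [Finset.sum_const, smul_eq_mul, mul_comm]
      _ ≤ ∑ p ∈ TP, ∑ j ∈ Finset.Ico (0:ℤ) (n:ℤ), TT.w p j :=
          Finset.sum_le_sum (fun p hp => TT.piece_sum (hTPpl p hp) (hTPsub p hp))
      _ = ∑ j ∈ Finset.Ico (0:ℤ) (n:ℤ), ∑ p ∈ TP, TT.w p j := Finset.sum_comm
      _ ≤ ∑ _j ∈ Finset.Ico (0:ℤ) (n:ℤ), 2 :=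
          Finset.sum_le_sum (fun j _ => TT.col_bound TP hTPpl hTPsub hdisTP j)
      _ = 2 * n := by simp [mul_comm]
  have harea : ∑ p ∈ P, p.card = 3 * n := by
    have h1 : (P.biUnion id).card = ∑ u ∈ P, (id u).card := Finset.card_biUnion hdis
    rw [huni] at h1
    have h2 : (rectCells 3 n).card = 3 * n := by simp [rectCells]
    rw [h2] at h1
    simpa using h1.symm
  have hsplit : ∑ p ∈ P.filter (fun p => p.card = 1), p.card
      + ∑ p ∈ P.filter (fun p => ¬ p.card = 1), p.card = ∑ p ∈ P, p.card :=
    Finset.sum_filter_add_sum_filter_not P _ _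
  rw [← hTPdef] at hsplit
  have hm1 : ∑ p ∈ P.filter (fun p => p.card = 1), p.card = monoCount P := by
    rw [monoCount]
    calc ∑ p ∈ P.filter (fun p => p.card = 1), p.card
        = ∑ p ∈ P.filter (fun p => p.card = 1), 1 :=
          Finset.sum_congr rfl (fun p hp => (Finset.mem_filter.mp hp).2)
      _ = (P.filter (fun p => p.card = 1)).card := by simp
  have hm4 : ∑ p ∈ TP, p.card = 4 * TP.card := by
    calc ∑ p ∈ TP, p.card = ∑ _p ∈ TP, 4 :=
          Finset.sum_congr rfl (fun p hp => TT.card_of_placement (hTPpl p hp))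
      _ = 4 * TP.card := by rw [Finset.sum_const, smul_eq_mul, mul_comm]
  omega

lemma TT.exists_tiling (n : ℕ) : ∃ P, IsTiling P (rectCells 3 n) := by
  classical
  refine ⟨(rectCells 3 n).image (fun c => {c}), ?_, ?_, ?_⟩
  · intro p hp
    obtain ⟨c, _, rfl⟩ := Finset.mem_image.mp hp
    exact Or.inr ⟨c, rfl⟩
  · intro p hp q hq hne
    obtain ⟨c, _, rfl⟩ := Finset.mem_image.mp hp
    obtain ⟨d, _, rfl⟩ := Finset.mem_image.mp hq
    rw [Finset.disjoint_singleton]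
    exact fun e => hne (congrArg _ e)
  · ext a
    simp only [Finset.mem_biUnion, Finset.mem_image, id]
    constructor
    · rintro ⟨p, ⟨c, hc, rfl⟩, ha⟩
      simp only [Finset.mem_singleton] at ha
      rwa [ha]
    · intro ha
      exact ⟨{a}, ⟨a, ha, rfl⟩, by simp⟩

lemma TT.main (n : ℕ) : n ≤ 3 * gapNumber 3 n := by
  obtain ⟨P0, hP0⟩ := TT.exists_tiling n
  have hne : {g | ∃ P, IsTiling P (rectCells 3 n) ∧ monoCount P = g}.Nonempty :=
    ⟨monoCount P0, P0, hP0, rfl⟩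
  have hmem : ∃ P, IsTiling P (rectCells 3 n) ∧ monoCount P = gapNumber 3 n :=
    Nat.sInf_mem hne
  obtain ⟨P, hP, hPg⟩ := hmem
  rw [← hPg]
  exact TT.main_count hP

/-- M(3,n) ≥ n/3 − 1 for all n, hence M(3,n) is unbounded as n → ∞. -/
theorem width3_unbounded :
    (∀ n : ℕ, (n : ℚ) / 3 - 1 ≤ (gapNumber 3 n : ℚ)) ∧
    (∀ B : ℕ, ∃ n : ℕ, B < gapNumber 3 n) := by
  constructor
  · intro n
    have h := TT.main n
    have h' : (n : ℚ) ≤ 3 * (gapNumber 3 n : ℚ) := by exact_mod_cast h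
    linarith
  · intro B
    refine ⟨3 * B + 3, ?_⟩
    have h := TT.main (3 * B + 3)
    omega
end
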